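/- Define f₄(b) = -4π ∫₀^π [(1 + b cosθ) sinθ cosθ] / (1 + cos²θ + 2b cosθ) dθ for b ∈ (-1,1). Then f₄ is differentiable with f₄'(b) = 4π ∫₀^π sin³θ cos²θ / (1 + cos²θ + 2b cosθ)² dθ, and in particular f₄'(b) > 0 for all b ∈ (-1,1). -/

import Mathlib

open Real MeasureTheory

noncomputable def f₄ (b : ℝ) : ℝ :=
  -(4 * Real.pi) * ∫ θ in (0:ℝ)..Real.pi,
    (1 + b*Real.cos θ) * Real.sin θ * Real.cos θ / (1 + (Real.cos θ)^2 + 2*b*Real.cos θ)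

lemma Dpos {b : ℝ} (hb : b ∈ Set.Ioo (-1:ℝ) 1) (θ : ℝ) :
    0 < 1 + (Real.cos θ)^2 + 2*b*Real.cos θ := by
  obtain ⟨h1, h2⟩ := hb
  nlinarith [sq_nonneg (Real.cos θ + b), mul_pos (by linarith : (0:ℝ) < 1 - b)
    (by linarith : (0:ℝ) < 1 + b)]

lemma key_deriv {b : ℝ} (hb : b ∈ Set.Ioo (-1:ℝ) 1) :
    HasDerivAt (fun x : ℝ => ∫ θ in Set.Ioc (0:ℝ) Real.pi,
        (1 + x*Real.cos θ) * Real.sin θ * Real.cos θ / (1 + (Real.cos θ)^2 + 2*x*Real.cos θ))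
      (∫ θ in Set.Ioc (0:ℝ) Real.pi,
        -((Real.sin θ)^3 * (Real.cos θ)^2 / (1 + (Real.cos θ)^2 + 2*b*Real.cos θ)^2)) b := by
  obtain ⟨h1, h2⟩ := hb
  set m : ℝ := (1 + |b|) / 2 with hm
  have hb1 : |b| < 1 := abs_lt.mpr ⟨h1, h2⟩
  have hm1 : m < 1 := by rw [hm]; linarith
  have hm0 : 0 ≤ m := by positivity
  set ε : ℝ := (1 - |b|) / 2 with hε
  have hε0 : 0 < ε := by rw [hε]; linarith
  have hball : ∀ x ∈ Metric.ball b ε, |x| < m := by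
    intro x hx
    rw [Metric.mem_ball, Real.dist_eq] at hx
    calc |x| ≤ |x - b| + |b| := by simpa using abs_add_le (x - b) b
    _ < ε + |b| := by linarith
    _ = m := by rw [hε, hm]; ring
  have hxmem : ∀ x : ℝ, |x| < m → x ∈ Set.Ioo (-1:ℝ) 1 := by
    intro x hx
    have := abs_lt.mp (hx.trans hm1)
    exact ⟨this.1, this.2⟩
  have hDx : ∀ x : ℝ, |x| < m → ∀ θ : ℝ, 0 < 1 + (Real.cos θ)^2 + 2*x*Real.cos θ :=
    fun x hx θ => Dpos (hxmem x hx) θ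
  have hDlow : ∀ x : ℝ, |x| < m → ∀ θ : ℝ,
      1 - m^2 ≤ 1 + (Real.cos θ)^2 + 2*x*Real.cos θ := by
    intro x hx θ
    have h1 : x^2 ≤ m^2 := by
      have := abs_le.mp hx.le
      nlinarith
    nlinarith [sq_nonneg (Real.cos θ + x)]
  have hmm : (0:ℝ) < 1 - m^2 := by nlinarith
  have hcont : ∀ x : ℝ, |x| < m → Continuous (fun θ : ℝ =>
      (1 + x*Real.cos θ) * Real.sin θ * Real.cos θ / (1 + (Real.cos θ)^2 + 2*x*Real.cos θ)) := by
    intro x hx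
    exact Continuous.div (by fun_prop) (by fun_prop) (fun θ => (hDx x hx θ).ne')
  have hcont' : Continuous (fun θ : ℝ =>
      -((Real.sin θ)^3 * (Real.cos θ)^2 / (1 + (Real.cos θ)^2 + 2*b*Real.cos θ)^2)) := by
    exact Continuous.neg (Continuous.div (by fun_prop) (by fun_prop)
      (fun θ => (pow_pos (Dpos ⟨h1, h2⟩ θ) 2).ne'))
  have H := hasDerivAt_integral_of_dominated_loc_of_deriv_le (μ := volume.restrict (Set.Ioc (0:ℝ) Real.pi))
    (F := fun x θ => (1 + x*Real.cos θ) * Real.sin θ * Real.cos θ / (1 + (Real.cos θ)^2 + 2*x*Real.cos θ))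
    (F' := fun x θ => -((Real.sin θ)^3 * (Real.cos θ)^2 / (1 + (Real.cos θ)^2 + 2*x*Real.cos θ)^2))
    (x₀ := b) (bound := fun _ => 1 / (1 - m^2)^2) (Metric.ball_mem_nhds b hε0)
    ?_ ?_ ?_ ?_ ?_ ?_
  · exact H.2
  · filter_upwards [Metric.ball_mem_nhds b hε0] with x hx
    exact (hcont x (hball x hx)).aestronglyMeasurable
  · exact Continuous.integrableOn_Ioc (hcont b (by rw [hm]; linarith))
  · exact hcont'.aestronglyMeasurable
  · refine Filter.Eventually.of_forall (fun θ => fun x hx => ?_)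
    have hD := hDlow x (hball x hx) θ
    have hDp := hDx x (hball x hx) θ
    rw [norm_neg, Real.norm_eq_abs, abs_div, abs_of_nonneg (by positivity :
      (0:ℝ) ≤ (1 + (Real.cos θ)^2 + 2*x*Real.cos θ)^2)]
    rw [div_le_div_iff₀ (by positivity) (by positivity)]
    have hnum : |(Real.sin θ)^3 * (Real.cos θ)^2| ≤ 1 := by
      rw [abs_mul]
      calc |(Real.sin θ)^3| * |(Real.cos θ)^2| ≤ 1 * 1 := by
            apply mul_le_mul _ _ (abs_nonneg _) zero_le_one
            · rw [abs_pow]; exact pow_le_one₀ (abs_nonneg _) (Real.abs_sin_le_one θ)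
            · rw [abs_pow]; exact pow_le_one₀ (abs_nonneg _) (Real.abs_cos_le_one θ)
      _ = 1 := by ring
    have hsq : (1 - m^2)^2 ≤ (1 + (Real.cos θ)^2 + 2*x*Real.cos θ)^2 := by
      apply pow_le_pow_left₀ hmm.le hD
    nlinarith [abs_nonneg ((Real.sin θ)^3 * (Real.cos θ)^2)]
  · exact integrableOn_const measure_Ioc_lt_top.ne
  · refine Filter.Eventually.of_forall (fun θ => fun x hx => ?_)
    have hDp := hDx x (hball x hx) θ
    set c := Real.cos θ with hc
    set s := Real.sin θ with hs
    have hnum : HasDerivAt (fun y : ℝ => (1 + y*c) * s * c) (s * c * c) x := by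
      have : (fun y : ℝ => (1 + y*c) * s * c) = fun y : ℝ => (s*c) * y * c + s * c := by
        funext y; ring
      rw [this]
      simpa using (((hasDerivAt_id x).const_mul (s*c)).mul_const c).add_const (s*c)
    have hden : HasDerivAt (fun y : ℝ => 1 + c^2 + 2*y*c) (2*c) x := by
      have : (fun y : ℝ => 1 + c^2 + 2*y*c) = fun y : ℝ => (2*c) * y + (1 + c^2) := by
        funext y; ring
      rw [this]
      simpa using ((hasDerivAt_id x).const_mul (2*c)).add_const (1 + c^2)
    have hd := hnum.div hden hDp.ne'
    refine HasDerivAt.congr_deriv hd (Eq.symm ?_)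
    have hsc : s^2 + c^2 = 1 := Real.sin_sq_add_cos_sq θ
    show -(s^3*c^2/(1+c^2+2*x*c)^2) = _
    rw [← neg_div, div_eq_div_iff (by positivity) (by positivity)]
    linear_combination ((1 + c^2 + 2*x*c)^2 * (-(s*c^2))) * hsc

theorem f₄_deriv : ∀ b ∈ Set.Ioo (-1:ℝ) 1,
    HasDerivAt f₄
      (4 * Real.pi * ∫ θ in (0:ℝ)..Real.pi,
        (Real.sin θ)^3 * (Real.cos θ)^2 / (1 + (Real.cos θ)^2 + 2*b*Real.cos θ)^2) b ∧
    0 < 4 * Real.pi * ∫ θ in (0:ℝ)..Real.pi,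
        (Real.sin θ)^3 * (Real.cos θ)^2 / (1 + (Real.cos θ)^2 + 2*b*Real.cos θ)^2 := by
  intro b hb
  have hDp := Dpos hb
  have hcontI : Continuous (fun θ : ℝ =>
      (Real.sin θ)^3 * (Real.cos θ)^2 / (1 + (Real.cos θ)^2 + 2*b*Real.cos θ)^2) :=
    Continuous.div (by fun_prop) (by fun_prop) (fun θ => (pow_pos (hDp θ) 2).ne')
  constructor
  · have key := key_deriv hb
    have hfun : f₄ = fun x : ℝ => -(4 * Real.pi) * ∫ θ in Set.Ioc (0:ℝ) Real.pi,
        (1 + x*Real.cos θ) * Real.sin θ * Real.cos θ / (1 + (Real.cos θ)^2 + 2*x*Real.cos θ) := by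
      funext x
      rw [f₄, intervalIntegral.integral_of_le Real.pi_pos.le]
    rw [hfun]
    have := key.const_mul (-(4 * Real.pi))
    refine this.congr_deriv ?_
    rw [intervalIntegral.integral_of_le Real.pi_pos.le, MeasureTheory.integral_neg]
    ring
  · have hI : 0 < ∫ θ in (0:ℝ)..Real.pi,
        (Real.sin θ)^3 * (Real.cos θ)^2 / (1 + (Real.cos θ)^2 + 2*b*Real.cos θ)^2 := by
      have hint1 : IntervalIntegrable (fun θ : ℝ =>
          (Real.sin θ)^3 * (Real.cos θ)^2 / (1 + (Real.cos θ)^2 + 2*b*Real.cos θ)^2)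
          volume 0 (Real.pi/4) := hcontI.intervalIntegrable _ _
      have hint2 : IntervalIntegrable (fun θ : ℝ =>
          (Real.sin θ)^3 * (Real.cos θ)^2 / (1 + (Real.cos θ)^2 + 2*b*Real.cos θ)^2)
          volume (Real.pi/4) Real.pi := hcontI.intervalIntegrable _ _
      rw [← intervalIntegral.integral_add_adjacent_intervals hint1 hint2]
      have hp1 : 0 < ∫ θ in (0:ℝ)..(Real.pi/4),
          (Real.sin θ)^3 * (Real.cos θ)^2 / (1 + (Real.cos θ)^2 + 2*b*Real.cos θ)^2 := by
        apply intervalIntegral.intervalIntegral_pos_of_pos_on hint1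
        · intro x hx
          have hs : 0 < Real.sin x := Real.sin_pos_of_pos_of_lt_pi hx.1
            (by nlinarith [Real.pi_pos, hx.2])
          have hc : 0 < Real.cos x := Real.cos_pos_of_mem_Ioo
            ⟨by nlinarith [Real.pi_pos, hx.1], by nlinarith [Real.pi_pos, hx.2]⟩
          exact div_pos (mul_pos (pow_pos hs 3) (pow_pos hc 2)) (pow_pos (hDp x) 2)
        · nlinarith [Real.pi_pos]
      have hp2 : 0 ≤ ∫ θ in (Real.pi/4)..Real.pi,
          (Real.sin θ)^3 * (Real.cos θ)^2 / (1 + (Real.cos θ)^2 + 2*b*Real.cos θ)^2 := by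
        apply intervalIntegral.integral_nonneg (by nlinarith [Real.pi_pos])
        intro x hx
        have hs : 0 ≤ Real.sin x := Real.sin_nonneg_of_nonneg_of_le_pi
          (by nlinarith [Real.pi_pos, hx.1]) hx.2
        positivity
      linarith
    positivity
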